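/- The determinant of the 4×4 matrix with rows (1, x_i, y_i, x_i·y_i) for i = 1,…,4 equals (1/12)·∑_{σ∈S_4} sign(σ)·(x_{σ(2)}−x_{σ(1)})(x_{σ(4)}−x_{σ(3)})(y_{σ(3)}−y_{σ(1)})(y_{σ(4)}−y_{σ(2)}). -/

import Mathlib

theorem my_det_fin_four {R : Type*} [CommRing R] (A : Matrix (Fin 4) (Fin 4) R) :
    A.det = 0
      + A 0 0*A 1 1*A 2 2*A 3 3 - A 0 0*A 1 1*A 2 3*A 3 2 - A 0 0*A 1 2*A 2 1*A 3 3 + A 0 0*A 1 2*A 2 3*A 3 1 + A 0 0*A 1 3*A 2 1*A 3 2 - A 0 0*A 1 3*A 2 2*A 3 1 - A 0 1*A 1 0*A 2 2*A 3 3 + A 0 1*A 1 0*A 2 3*A 3 2 + A 0 1*A 1 2*A 2 0*A 3 3 - A 0 1*A 1 2*A 2 3*A 3 0 - A 0 1*A 1 3*A 2 0*A 3 2 + A 0 1*A 1 3*A 2 2*A 3 0 + A 0 2*A 1 0*A 2 1*A 3 3 - A 0 2*A 1 0*A 2 3*A 3 1 - A 0 2*A 1 1*A 2 0*A 3 3 +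 A 0 2*A 1 1*A 2 3*A 3 0 + A 0 2*A 1 3*A 2 0*A 3 1 - A 0 2*A 1 3*A 2 1*A 3 0 - A 0 3*A 1 0*A 2 1*A 3 2 + A 0 3*A 1 0*A 2 2*A 3 1 + A 0 3*A 1 1*A 2 0*A 3 2 - A 0 3*A 1 1*A 2 2*A 3 0 - A 0 3*A 1 2*A 2 0*A 3 1 + A 0 3*A 1 2*A 2 1*A 3 0
    := by
  rw [Matrix.det_succ_row_zero]
  simp [Fin.sum_univ_succ, Matrix.det_fin_three, Matrix.submatrix_apply, Fin.succAbove]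
  ring

def g : Fin 24 → Equiv.Perm (Fin 4) := ![⟨![0,1,2,3], ![0,1,2,3], by decide, by decide⟩,
  ⟨![0,1,3,2], ![0,1,3,2], by decide, by decide⟩,
  ⟨![0,2,1,3], ![0,2,1,3], by decide, by decide⟩,
  ⟨![0,2,3,1], ![0,3,1,2], by decide, by decide⟩,
  ⟨![0,3,1,2], ![0,2,3,1], by decide, by decide⟩,
  ⟨![0,3,2,1], ![0,3,2,1], by decide, by decide⟩,
  ⟨![1,0,2,3], ![1,0,2,3], by decide, by decide⟩,
  ⟨![1,0,3,2], ![1,0,3,2], by decide, by decide⟩,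
  ⟨![1,2,0,3], ![2,0,1,3], by decide, by decide⟩,
  ⟨![1,2,3,0], ![3,0,1,2], by decide, by decide⟩,
  ⟨![1,3,0,2], ![2,0,3,1], by decide, by decide⟩,
  ⟨![1,3,2,0], ![3,0,2,1], by decide, by decide⟩,
  ⟨![2,0,1,3], ![1,2,0,3], by decide, by decide⟩,
  ⟨![2,0,3,1], ![1,3,0,2], by decide, by decide⟩,
  ⟨![2,1,0,3], ![2,1,0,3], by decide, by decide⟩,
  ⟨![2,1,3,0], ![3,1,0,2], by decide, by decide⟩,
  ⟨![2,3,0,1], ![2,3,0,1], by decide, by decide⟩,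
  ⟨![2,3,1,0], ![3,2,0,1], by decide, by decide⟩,
  ⟨![3,0,1,2], ![1,2,3,0], by decide, by decide⟩,
  ⟨![3,0,2,1], ![1,3,2,0], by decide, by decide⟩,
  ⟨![3,1,0,2], ![2,1,3,0], by decide, by decide⟩,
  ⟨![3,1,2,0], ![3,1,2,0], by decide, by decide⟩,
  ⟨![3,2,0,1], ![2,3,1,0], by decide, by decide⟩,
  ⟨![3,2,1,0], ![3,2,1,0], by decide, by decide⟩]


set_option maxHeartbeats 1000000 in
theorem stmt_1 {F : Type*} [Field F] [CharZero F] (x y : Fin 4 → F) :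
    (Matrix.of fun i j => ![1, x i, y i, x i * y i] j : Matrix (Fin 4) (Fin 4) F).det =
      (1 / 12 : F) * ∑ σ : Equiv.Perm (Fin 4),
        ((Equiv.Perm.sign σ : ℤ) : F) *
          ((x (σ 1) - x (σ 0)) * (x (σ 3) - x (σ 2)) *
            (y (σ 2) - y (σ 0)) * (y (σ 3) - y (σ 1))) := by
  have hg : Function.Bijective g := by decide
  rw [← Fintype.sum_bijective g hg _ _ (fun _ => rfl), my_det_fin_four]
  simp only [Fin.sum_univ_succ, Fin.sum_univ_zero]
  have s0 : Equiv.Perm.sign (⟨![0,1,2,3], ![0,1,2,3], by decide, by decide⟩ : Equiv.Perm (Fin 4)) = 1 := by decide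
  have s1 : Equiv.Perm.sign (⟨![0,1,3,2], ![0,1,3,2], by decide, by decide⟩ : Equiv.Perm (Fin 4)) = -1 := by decide
  have s2 : Equiv.Perm.sign (⟨![0,2,1,3], ![0,2,1,3], by decide, by decide⟩ : Equiv.Perm (Fin 4)) = -1 := by decide
  have s3 : Equiv.Perm.sign (⟨![0,2,3,1], ![0,3,1,2], by decide, by decide⟩ : Equiv.Perm (Fin 4)) = 1 := by decide
  have s4 : Equiv.Perm.sign (⟨![0,3,1,2], ![0,2,3,1], by decide, by decide⟩ : Equiv.Perm (Fin 4)) = 1 := by decide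
  have s5 : Equiv.Perm.sign (⟨![0,3,2,1], ![0,3,2,1], by decide, by decide⟩ : Equiv.Perm (Fin 4)) = -1 := by decide
  have s6 : Equiv.Perm.sign (⟨![1,0,2,3], ![1,0,2,3], by decide, by decide⟩ : Equiv.Perm (Fin 4)) = -1 := by decide
  have s7 : Equiv.Perm.sign (⟨![1,0,3,2], ![1,0,3,2], by decide, by decide⟩ : Equiv.Perm (Fin 4)) = 1 := by decide
  have s8 : Equiv.Perm.sign (⟨![1,2,0,3], ![2,0,1,3], by decide, by decide⟩ : Equiv.Perm (Fin 4)) = 1 := by decide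
  have s9 : Equiv.Perm.sign (⟨![1,2,3,0], ![3,0,1,2], by decide, by decide⟩ : Equiv.Perm (Fin 4)) = -1 := by decide
  have s10 : Equiv.Perm.sign (⟨![1,3,0,2], ![2,0,3,1], by decide, by decide⟩ : Equiv.Perm (Fin 4)) = -1 := by decide
  have s11 : Equiv.Perm.sign (⟨![1,3,2,0], ![3,0,2,1], by decide, by decide⟩ : Equiv.Perm (Fin 4)) = 1 := by decide
  have s12 : Equiv.Perm.sign (⟨![2,0,1,3], ![1,2,0,3], by decide, by decide⟩ : Equiv.Perm (Fin 4)) = 1 := by decide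
  have s13 : Equiv.Perm.sign (⟨![2,0,3,1], ![1,3,0,2], by decide, by decide⟩ : Equiv.Perm (Fin 4)) = -1 := by decide
  have s14 : Equiv.Perm.sign (⟨![2,1,0,3], ![2,1,0,3], by decide, by decide⟩ : Equiv.Perm (Fin 4)) = -1 := by decide
  have s15 : Equiv.Perm.sign (⟨![2,1,3,0], ![3,1,0,2], by decide, by decide⟩ : Equiv.Perm (Fin 4)) = 1 := by decide
  have s16 : Equiv.Perm.sign (⟨![2,3,0,1], ![2,3,0,1], by decide, by decide⟩ : Equiv.Perm (Fin 4)) = 1 := by decide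
  have s17 : Equiv.Perm.sign (⟨![2,3,1,0], ![3,2,0,1], by decide, by decide⟩ : Equiv.Perm (Fin 4)) = -1 := by decide
  have s18 : Equiv.Perm.sign (⟨![3,0,1,2], ![1,2,3,0], by decide, by decide⟩ : Equiv.Perm (Fin 4)) = -1 := by decide
  have s19 : Equiv.Perm.sign (⟨![3,0,2,1], ![1,3,2,0], by decide, by decide⟩ : Equiv.Perm (Fin 4)) = 1 := by decide
  have s20 : Equiv.Perm.sign (⟨![3,1,0,2], ![2,1,3,0], by decide, by decide⟩ : Equiv.Perm (Fin 4)) = 1 := by decide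
  have s21 : Equiv.Perm.sign (⟨![3,1,2,0], ![3,1,2,0], by decide, by decide⟩ : Equiv.Perm (Fin 4)) = -1 := by decide
  have s22 : Equiv.Perm.sign (⟨![3,2,0,1], ![2,3,1,0], by decide, by decide⟩ : Equiv.Perm (Fin 4)) = -1 := by decide
  have s23 : Equiv.Perm.sign (⟨![3,2,1,0], ![3,2,1,0], by decide, by decide⟩ : Equiv.Perm (Fin 4)) = 1 := by decide
  simp only [g, Matrix.cons_val_zero, Matrix.cons_val_one, Matrix.head_cons,
    Matrix.cons_val_two, Matrix.cons_val_three, Matrix.vecHead, Matrix.vecTail,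
    Matrix.cons_val_succ, Equiv.coe_fn_mk, Matrix.of_apply, Function.comp_apply]
  simp only [s0, s1, s2, s3, s4, s5, s6, s7, s8, s9, s10, s11, s12, s13, s14, s15, s16, s17, s18, s19, s20, s21, s22, s23, Units.val_one, Units.val_neg, Int.cast_one, Int.cast_neg, one_mul, neg_mul, neg_neg]
  ring
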